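/- Let r be a natural number with r ≥ 1 and let n = 2r. Then the maximal dimension of a nonempty affine subspace of the space A(n,ℝ) of antisymmetric n×n real matrices all of whose elements have rank 2r equals r(r−1). That is: there exists a nonempty affine subspace S of A(2r,ℝ) of dimension r(r−1) such that every matrix in S has rank 2r, and every nonempty affine subspace S of A(2r,ℝ) with all elements of rank 2r has dimension at most r(r−1). -/

import Mathlib

set_option linter.unusedSectionVars false
set_option linter.unusedVariables false
set_option maxHeartbeats 1000000

open Matrix

namespace Stmt1Aux



variable {m : Type*} [Fintype m] [DecidableEq m]

lemma dot_skew (Q : Matrix m m ℝ) (h : Qᵀ = -Q) (u : m → ℝ) : u ⬝ᵥ (Q *ᵥ u) = 0 := by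
  have h1 : u ⬝ᵥ (Q *ᵥ u) = (Qᵀ *ᵥ u) ⬝ᵥ u := by
    rw [Matrix.dotProduct_mulVec, Matrix.mulVec_transpose]
  rw [h, Matrix.neg_mulVec, neg_dotProduct] at h1
  rw [dotProduct_comm] at h1 ⊢
  linarith

lemma dot_skew_cross (K : Matrix m m ℝ) (h : Kᵀ = -K) (u v : m → ℝ) :
    u ⬝ᵥ (K *ᵥ v) + v ⬝ᵥ (K *ᵥ u) = 0 := by
  have h1 : v ⬝ᵥ (K *ᵥ u) = (Kᵀ *ᵥ v) ⬝ᵥ u := by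
    rw [Matrix.dotProduct_mulVec, Matrix.mulVec_transpose]
  rw [h, Matrix.neg_mulVec, neg_dotProduct] at h1
  rw [h1, dotProduct_comm u]
  ring

lemma mulVec_eq_mulVecLin {n : ℕ} (A : Matrix (Fin n) (Fin n) ℝ) :
    A.mulVec = ⇑A.mulVecLin := by
  ext v i; simp [Matrix.mulVecLin_apply]

lemma injective_of_rank_eq {n : ℕ} {A : Matrix (Fin n) (Fin n) ℝ} (h : A.rank = n) :
    Function.Injective A.mulVec := by
  have htop : LinearMap.range A.mulVecLin = ⊤ := by
    apply Submodule.eq_top_of_finrank_eq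
    rw [← Matrix.rank, h]
    simp [Module.finrank_pi]
  have hsurj : Function.Surjective A.mulVecLin := LinearMap.range_eq_top.mp htop
  have hinj : Function.Injective A.mulVecLin :=
    (LinearMap.injective_iff_surjective).mpr hsurj
  rw [mulVec_eq_mulVecLin]; exact hinj

lemma rank_eq_of_injective {n : ℕ} {A : Matrix (Fin n) (Fin n) ℝ}
    (h : Function.Injective A.mulVec) : A.rank = n := by
  have hinj : Function.Injective A.mulVecLin := by rwa [mulVec_eq_mulVecLin] at h
  have := LinearMap.finrank_range_of_inj hinj
  rw [Matrix.rank, this]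
  simp [Module.finrank_pi]

lemma sq_sum_trace (Y : Matrix m m ℝ) : (Yᵀ * Y).trace = ∑ i, ∑ j, (Y i j)^2 := by
  rw [Matrix.trace]
  simp only [Matrix.diag_apply, Matrix.mul_apply, Matrix.transpose_apply]
  rw [Finset.sum_comm]
  congr 1; ext i; congr 1; ext j; ring

lemma eq_zero_of_trace_eq_zero {Y : Matrix m m ℝ} (h : (Yᵀ * Y).trace ≤ 0) : Y = 0 := by
  rw [sq_sum_trace] at h
  have hz : ∑ i, ∑ j, (Y i j)^2 = 0 := le_antisymm h (by positivity)
  ext i j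
  have h1 := Finset.sum_eq_zero_iff_of_nonneg (fun i _ => by positivity) |>.mp hz i (by simp)
  have h2 := Finset.sum_eq_zero_iff_of_nonneg (fun j _ => by positivity) |>.mp h1 j (by simp)
  simpa using pow_eq_zero_iff (n := 2) (by norm_num) |>.mp h2



variable {m : Type*} [Fintype m] [DecidableEq m]

/-- The submodule of antisymmetric matrices. -/
def skewSub (m : Type*) [Fintype m] : Submodule ℝ (Matrix m m ℝ) where
  carrier := {B | Bᵀ = -B}
  add_mem' := by
    intro a b ha hb
    simp only [Set.mem_setOf_eq] at *
    rw [Matrix.transpose_add, ha, hb, neg_add]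
  zero_mem' := by simp
  smul_mem' := by
    intro c x hx
    simp only [Set.mem_setOf_eq] at *
    rw [Matrix.transpose_smul, hx, smul_neg]

lemma mem_skewSub {B : Matrix m m ℝ} : B ∈ skewSub m ↔ Bᵀ = -B := Iff.rfl

/-- Linear equivalence between skew matrices and functions on strictly upper pairs. -/
noncomputable def skewEquiv (r : ℕ) :
    (skewSub (Fin r)) ≃ₗ[ℝ] ({p : Fin r × Fin r // p.1 < p.2} → ℝ) where
  toFun B := fun p => B.1 p.1.1 p.1.2
  map_add' := by intros; rfl
  map_smul' := by intros; rfl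
  invFun f := ⟨Matrix.of fun i j =>
      if h : i < j then f ⟨(i,j), h⟩ else if h : j < i then -f ⟨(j,i), h⟩ else 0, by
    rw [mem_skewSub]
    ext i j
    simp only [Matrix.transpose_apply, Matrix.neg_apply, Matrix.of_apply]
    rcases lt_trichotomy i j with h | h | h
    · rw [dif_neg (asymm h), dif_pos h, dif_pos h]
    · subst h; rw [dif_neg (lt_irrefl i), dif_neg (lt_irrefl i)]; ring
    · rw [dif_pos h, dif_neg (asymm h), dif_pos h]; ring⟩
  left_inv := by
    rintro ⟨B, hB⟩
    rw [mem_skewSub] at hB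
    ext i j
    simp only [Matrix.of_apply]
    rcases lt_trichotomy i j with h | h | h
    · rw [dif_pos h]
    · subst h
      rw [dif_neg (lt_irrefl i), dif_neg (lt_irrefl i)]
      have := congrFun (congrFun hB i) i
      simp only [Matrix.transpose_apply, Matrix.neg_apply] at this
      linarith
    · rw [dif_neg (asymm h), dif_pos h]
      have := congrFun (congrFun hB j) i
      simp only [Matrix.transpose_apply, Matrix.neg_apply] at this
      linarith
  right_inv := by
    intro f
    ext ⟨⟨i, j⟩, h⟩
    simp only [Matrix.of_apply]
    rw [dif_pos h]

lemma card_upper (r : ℕ) :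
    2 * Fintype.card {p : Fin r × Fin r // p.1 < p.2} = r * (r - 1) := by
  classical
  rw [Fintype.card_subtype]
  have hswap : (Finset.univ.filter fun p : Fin r × Fin r => p.1 < p.2).card
      = (Finset.univ.filter fun p : Fin r × Fin r => p.2 < p.1).card := by
    apply Finset.card_bij (fun p _ => (p.2, p.1))
    · intro a ha; simp only [Finset.mem_filter, Finset.mem_univ, true_and] at *; exact ha
    · rintro ⟨a1, a2⟩ _ ⟨b1, b2⟩ _ h
      simp only [Prod.mk.injEq] at h
      simp [h.1, h.2]
    · rintro ⟨b1, b2⟩ hb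
      refine ⟨(b2, b1), ?_, rfl⟩
      simp only [Finset.mem_filter, Finset.mem_univ, true_and] at *; exact hb
  have hunion : (Finset.univ.filter fun p : Fin r × Fin r => p.1 < p.2)
      ∪ (Finset.univ.filter fun p : Fin r × Fin r => p.2 < p.1)
      = (Finset.univ : Finset (Fin r)).offDiag := by
    ext ⟨a, b⟩
    simp only [Finset.mem_union, Finset.mem_filter, Finset.mem_univ, true_and,
      Finset.mem_offDiag]
    constructor
    · rintro (h | h)
      · exact ne_of_lt h
      · exact (ne_of_lt h).symm
    · intro h
      rcases lt_or_gt_of_ne h with h | h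
      · exact Or.inl h
      · exact Or.inr h
  have hdisj : Disjoint (Finset.univ.filter fun p : Fin r × Fin r => p.1 < p.2)
      (Finset.univ.filter fun p : Fin r × Fin r => p.2 < p.1) := by
    rw [Finset.disjoint_filter]
    intro p _ h1 h2
    exact absurd h2 (asymm h1)
  have hcard := Finset.card_union_of_disjoint hdisj
  rw [hunion] at hcard
  rw [Finset.offDiag_card] at hcard
  simp only [Finset.card_univ, Fintype.card_fin] at hcard
  have : r * (r - 1) = r * r - r := by
    cases r with
    | zero => rfl
    | succ k => simp [Nat.succ_sub_one, Nat.mul_succ, Nat.succ_mul]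
  omega

lemma finrank_skewSub (r : ℕ) :
    2 * Module.finrank ℝ (skewSub (Fin r)) = r * (r - 1) := by
  rw [LinearEquiv.finrank_eq (skewEquiv r)]
  rw [Module.finrank_pi]
  exact card_upper r



variable {m : Type*} [Fintype m] [DecidableEq m]

/-- Matrices as functions on pairs. -/
noncomputable def matEquivFun : Matrix m m ℝ ≃ₗ[ℝ] (m × m → ℝ) where
  toFun M p := M p.1 p.2
  map_add' := by intros; rfl
  map_smul' := by intros; rfl
  invFun g := Matrix.of fun i j => g (i, j)
  left_inv := fun M => rfl
  right_inv := fun g => rfl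

noncomputable def matBasis : Module.Basis (m × m) ℝ (Matrix m m ℝ) :=
  Module.Basis.ofEquivFun matEquivFun

lemma matBasis_apply (p : m × m) :
    (matBasis p : Matrix m m ℝ) = Matrix.of fun a b => if (a, b) = p then (1:ℝ) else 0 := by
  rw [matBasis, Module.Basis.coe_ofEquivFun]
  ext a b
  simp only [Matrix.of_apply]
  show (Function.update (0 : m × m → ℝ) p 1) (a, b) = _
  rw [Function.update_apply]
  simp

lemma trace_formula (f : Matrix m m ℝ →ₗ[ℝ] Matrix m m ℝ) :
    LinearMap.trace ℝ _ f = ∑ p : m × m, f (matBasis p) p.1 p.2 := by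
  rw [LinearMap.trace_eq_matrix_trace ℝ matBasis f, Matrix.trace]
  congr 1
  ext p
  rw [Matrix.diag_apply, LinearMap.toMatrix_apply]
  rw [matBasis, Module.Basis.ofEquivFun_repr_apply]
  rfl

/-- transpose as a linear map -/
def tmap : Matrix m m ℝ →ₗ[ℝ] Matrix m m ℝ where
  toFun M := Mᵀ
  map_add' := Matrix.transpose_add
  map_smul' := by intros; simp [Matrix.transpose_smul]

/-- X ↦ K * X * K as a linear map -/
def conjMap (K : Matrix m m ℝ) : Matrix m m ℝ →ₗ[ℝ] Matrix m m ℝ where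
  toFun X := K * X * K
  map_add' X Y := by simp [Matrix.mul_add, Matrix.add_mul]
  map_smul' := by intros; simp [Matrix.mul_smul, Matrix.smul_mul]

lemma trace_tmap : LinearMap.trace ℝ _ (tmap (m := m)) = Fintype.card m := by
  rw [trace_formula]
  have : ∀ p : m × m, (tmap (matBasis p) : Matrix m m ℝ) p.1 p.2
      = if p.1 = p.2 then (1:ℝ) else 0 := by
    rintro ⟨i, j⟩
    show ((matBasis (i, j) : Matrix m m ℝ))ᵀ i j = _
    rw [matBasis_apply]
    simp only [Matrix.transpose_apply, Matrix.of_apply, Prod.mk.injEq]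
    by_cases h : i = j
    · subst h; simp
    · rw [if_neg, if_neg h]
      rintro ⟨h1, h2⟩; exact h h1.symm
  rw [Finset.sum_congr rfl (fun p _ => this p)]
  rw [Fintype.sum_prod_type]
  simp [Finset.sum_ite_eq]

lemma conj_entry (K : Matrix m m ℝ) (i j a b : m) :
    (K * (matBasis (i, j) : Matrix m m ℝ) * K) a b = K a i * K j b := by
  rw [matBasis_apply]
  simp only [Matrix.mul_apply, Matrix.of_apply, Prod.mk.injEq]
  have : ∀ c : m, (∑ d : m, K a d * if d = i ∧ c = j then (1:ℝ) else 0)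
      = if c = j then K a i else 0 := by
    intro c
    by_cases hc : c = j
    · subst hc
      simp [Finset.sum_ite_eq']
    · simp [hc]
  calc ∑ c : m, (∑ d : m, K a d * if d = i ∧ c = j then (1:ℝ) else 0) * K c b
      = ∑ c : m, (if c = j then K a i else 0) * K c b := by
        apply Finset.sum_congr rfl; intro c _; rw [this c]
    _ = K a i * K j b := by simp [Finset.sum_ite_eq']

lemma trace_conjMap (K : Matrix m m ℝ) (hdiag : ∀ i, K i i = 0) :
    LinearMap.trace ℝ _ (conjMap K) = 0 := by
  rw [trace_formula]
  apply Finset.sum_eq_zero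
  rintro ⟨i, j⟩ _
  show (K * (matBasis (i, j) : Matrix m m ℝ) * K) i j = 0
  rw [conj_entry, hdiag, zero_mul]

lemma matBasis_transpose (i j : m) :
    ((matBasis (i, j) : Matrix m m ℝ))ᵀ = (matBasis (j, i) : Matrix m m ℝ) := by
  rw [matBasis_apply, matBasis_apply]
  ext a b
  simp only [Matrix.transpose_apply, Matrix.of_apply, Prod.mk.injEq]
  by_cases h1 : a = j <;> by_cases h2 : b = i <;> simp [h1, h2]

lemma trace_conjMap_tmap (K : Matrix m m ℝ) (hKKt : K * Kᵀ = 1) :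
    LinearMap.trace ℝ _ ((conjMap K) ∘ₗ (tmap (m := m))) = Fintype.card m := by
  rw [trace_formula]
  have : ∀ p : m × m, ((conjMap K ∘ₗ tmap) (matBasis p) : Matrix m m ℝ) p.1 p.2
      = K p.1 p.2 * K p.1 p.2 := by
    rintro ⟨i, j⟩
    show (K * ((matBasis (i, j) : Matrix m m ℝ))ᵀ * K) i j = _
    rw [matBasis_transpose, conj_entry]
  rw [Finset.sum_congr rfl (fun p _ => this p)]
  have h2 : ∑ p : m × m, K p.1 p.2 * K p.1 p.2 = (K * Kᵀ).trace := by
    rw [Matrix.trace]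
    simp only [Matrix.diag_apply, Matrix.mul_apply, Matrix.transpose_apply]
    rw [Fintype.sum_prod_type]
  rw [h2, hKKt, Matrix.trace_one]


section Proj
variable {m : Type*} [Fintype m] [DecidableEq m]

/-- skew matrices anticommuting with K -/
def antiSub (K : Matrix m m ℝ) : Submodule ℝ (Matrix m m ℝ) where
  carrier := {B | Bᵀ = -B ∧ K * B = -(B * K)}
  add_mem' := by
    rintro a b ⟨ha1, ha2⟩ ⟨hb1, hb2⟩
    constructor
    · rw [Matrix.transpose_add, ha1, hb1, neg_add]
    · rw [Matrix.mul_add, ha2, hb2, Matrix.add_mul, neg_add]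
  zero_mem' := by simp
  smul_mem' := by
    rintro c x ⟨hx1, hx2⟩
    constructor
    · rw [Matrix.transpose_smul, hx1, smul_neg]
    · rw [Matrix.mul_smul, hx2, Matrix.smul_mul, smul_neg]

noncomputable def projAnti (K : Matrix m m ℝ) : Matrix m m ℝ →ₗ[ℝ] Matrix m m ℝ :=
  (4⁻¹ : ℝ) • (LinearMap.id - tmap + conjMap K - (conjMap K) ∘ₗ tmap)

lemma projAnti_apply (K X : Matrix m m ℝ) :
    projAnti K X = (4⁻¹ : ℝ) • (X - Xᵀ + K * X * K - K * Xᵀ * K) := rfl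

lemma isProj_projAnti (K : Matrix m m ℝ) (hKs : Kᵀ = -K) (hK2 : K * K = -1) :
    LinearMap.IsProj (antiSub K) (projAnti K) := by
  have hKinv : ∀ Z : Matrix m m ℝ, K * (K * Z) = -Z := by
    intro Z; rw [← Matrix.mul_assoc, hK2, Matrix.neg_mul, Matrix.one_mul]
  constructor
  · intro X
    rw [projAnti_apply]
    apply Submodule.smul_mem
    constructor
    · simp only [Matrix.transpose_sub, Matrix.transpose_add, Matrix.transpose_mul,
        Matrix.transpose_transpose, hKs, Matrix.neg_mul, Matrix.mul_neg, neg_neg]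
      rw [← Matrix.mul_assoc, ← Matrix.mul_assoc]
      abel
    · simp only [Matrix.mul_sub, Matrix.sub_mul, Matrix.mul_add, Matrix.add_mul,
        Matrix.mul_assoc, hKinv, hK2, Matrix.mul_neg, Matrix.mul_one, neg_neg, neg_sub, neg_add]
      abel
  · rintro B ⟨hB1, hB2⟩
    rw [projAnti_apply, hB1]
    have hKBK : K * B * K = B := by
      rw [hB2, Matrix.neg_mul, Matrix.mul_assoc, hK2, Matrix.mul_neg, Matrix.mul_one, neg_neg]
    rw [show K * -B * K = -(K * B * K) by rw [Matrix.mul_neg, Matrix.neg_mul], hKBK]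
    module

lemma trace_projAnti (K : Matrix m m ℝ) (hKs : Kᵀ = -K) (hK2 : K * K = -1) :
    LinearMap.trace ℝ _ (projAnti K)
      = 4⁻¹ * ((Fintype.card m : ℝ) * (Fintype.card m) - 2 * (Fintype.card m)) := by
  have hdiag : ∀ i, K i i = 0 := by
    intro i
    have := congrFun (congrFun hKs i) i
    simp only [Matrix.transpose_apply, Matrix.neg_apply] at this
    linarith
  have hKKt : K * Kᵀ = 1 := by rw [hKs, Matrix.mul_neg, hK2, neg_neg]
  rw [projAnti, _root_.map_smul, map_sub, map_add, map_sub, LinearMap.trace_id,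
    trace_tmap, trace_conjMap K hdiag, trace_conjMap_tmap K hKKt]
  rw [Module.finrank_matrix, Module.finrank_self]
  push_cast [smul_eq_mul]
  ring

lemma finrank_antiSub (K : Matrix m m ℝ) (hKs : Kᵀ = -K) (hK2 : K * K = -1) :
    ((Module.finrank ℝ (antiSub K) : ℝ))
      = 4⁻¹ * ((Fintype.card m : ℝ) * (Fintype.card m) - 2 * (Fintype.card m)) := by
  rw [← (isProj_projAnti K hKs hK2).trace, trace_projAnti K hKs hK2]

lemma finrank_le_antiSub (K : Matrix m m ℝ) (hKs : Kᵀ = -K) (hK2 : K * K = -1)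
    (V : Submodule ℝ (Matrix m m ℝ)) (hskew : ∀ B ∈ V, Bᵀ = -B)
    (hcomm : ∀ B ∈ V, K * B = B * K → B = 0) :
    Module.finrank ℝ V ≤ Module.finrank ℝ (antiSub K) := by
  have hproj := isProj_projAnti K hKs hK2
  let g : V →ₗ[ℝ] (antiSub K) :=
    LinearMap.codRestrict _ ((projAnti K) ∘ₗ V.subtype) (fun x => hproj.map_mem _)
  have hg : Function.Injective g := by
    intro x y hxy
    have hBxy : projAnti K ((x : Matrix m m ℝ) - (y : Matrix m m ℝ)) = 0 := by
      have := congrArg (Subtype.val) hxy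
      simp only [g, LinearMap.codRestrict_apply, LinearMap.comp_apply,
        Submodule.subtype_apply] at this
      rw [map_sub, this, sub_self]
    have hBmem : ((x : Matrix m m ℝ) - (y : Matrix m m ℝ)) ∈ V := sub_mem x.2 y.2
    have hBskew : ((x : Matrix m m ℝ) - (y : Matrix m m ℝ))ᵀ = -((x : Matrix m m ℝ) - (y : Matrix m m ℝ)) := hskew _ hBmem
    set B := (x : Matrix m m ℝ) - (y : Matrix m m ℝ) with hB
    rw [projAnti_apply, hBskew] at hBxy
    have h4 : B - -B + K * B * K - K * (-B) * K = 0 := by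
      have := smul_eq_zero.mp hBxy
      rcases this with h | h
      · norm_num at h
      · exact h
    have hKBK : K * B * K = -B := by
      rw [Matrix.mul_neg, Matrix.neg_mul] at h4
      have : (2:ℝ) • (B + K * B * K) = 0 := by
        rw [two_smul]
        calc B + K * B * K + (B + K * B * K) = B - -B + K * B * K - -(K * B * K) := by abel
        _ = 0 := h4
      have h5 := smul_eq_zero.mp this
      rcases h5 with h | h
      · norm_num at h
      · linear_combination (norm := (rw [← sub_eq_zero]; abel_nf; try ring_nf)) h
    have hcommB : K * B = B * K := by
      have := congrArg (fun M => M * K) hKBK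
      rw [Matrix.mul_assoc (K * B), hK2, Matrix.mul_neg, Matrix.mul_one, Matrix.neg_mul] at this
      have := neg_injective this
      exact this.symm ▸ rfl
    have : B = 0 := hcomm B hBmem hcommB
    have : (x : Matrix m m ℝ) = y := by
      rw [hB] at this
      exact sub_eq_zero.mp this
    exact Subtype.ext this
  exact LinearMap.finrank_le_finrank_of_injective hg

end Proj

open scoped MatrixOrder in
lemma exists_K (A₀ : Matrix m m ℝ) (hskew : A₀ᵀ = -A₀) (hunit : IsUnit A₀.det) :
    ∃ K S : Matrix m m ℝ, Kᵀ = -K ∧ K * K = -1 ∧ K * S = A₀ ∧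
      ∃ R : Matrix m m ℝ, Rᵀ = R ∧ IsUnit R.det ∧ R * R = S := by
  set D := A₀ᵀ * A₀ with hDdef
  have hD' : D = -(A₀ * A₀) := by rw [hDdef, hskew, Matrix.neg_mul]
  have hPSD : D.PosSemidef := by
    have := Matrix.posSemidef_conjTranspose_mul_self A₀
    rwa [Matrix.conjTranspose_eq_transpose_of_trivial] at this
  have hDdet : IsUnit D.det := by
    rw [hDdef, Matrix.det_mul, Matrix.det_transpose]
    exact hunit.mul hunit
  set S := CFC.sqrt D with hSdef
  have hS2 : S * S = D := CFC.sqrt_mul_sqrt_self D hPSD.nonneg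
  have hSPSD : S.PosSemidef := (CFC.sqrt_nonneg D).posSemidef
  have hSsym : Sᵀ = S := by
    have := hSPSD.1
    rwa [Matrix.IsHermitian, Matrix.conjTranspose_eq_transpose_of_trivial] at this
  have hSdet : IsUnit S.det := by
    apply isUnit_of_mul_isUnit_left (y := S.det)
    rw [← Matrix.det_mul, hS2]; exact hDdet
  set R := CFC.sqrt S with hRdef
  have hR2 : R * R = S := CFC.sqrt_mul_sqrt_self S hSPSD.nonneg
  have hRPSD : R.PosSemidef := (CFC.sqrt_nonneg S).posSemidef
  have hRsym : Rᵀ = R := by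
    have := hRPSD.1
    rwa [Matrix.IsHermitian, Matrix.conjTranspose_eq_transpose_of_trivial] at this
  have hRdet : IsUnit R.det := by
    apply isUnit_of_mul_isUnit_left (y := R.det)
    rw [← Matrix.det_mul, hR2]; exact hSdet
  have hDcomm : D * A₀ = A₀ * D := by
    rw [hD']
    rw [Matrix.neg_mul, Matrix.mul_neg, Matrix.mul_assoc]
  -- commute S A₀
  set X := S * A₀ - A₀ * S with hXdef
  have h1 : S * X + X * S = 0 := by
    have e1 : S * X + X * S = S * S * A₀ - A₀ * (S * S) := by
      rw [hXdef]
      rw [Matrix.mul_sub, Matrix.sub_mul]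
      rw [← Matrix.mul_assoc, ← Matrix.mul_assoc, Matrix.mul_assoc A₀ S S]
      abel
    rw [e1, hS2, hDcomm, sub_self]
  have hSX : S * X = -(X * S) := by linear_combination (norm := (rw [← sub_eq_zero]; abel_nf)) h1
  have hRR : ∀ Z : Matrix m m ℝ, R * (R * Z) = S * Z := fun Z => by
    rw [← Matrix.mul_assoc, hR2]
  have hX0 : X = 0 := by
    have hS5 : S * (X * S) = -(X * D) := by
      rw [← Matrix.mul_assoc, hSX, Matrix.neg_mul, Matrix.mul_assoc, hS2]
    have hleft : ((R * X * R)ᵀ * (R * X * R)).trace = -((Xᵀ * (X * D)).trace) := by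
      have hYt : (R * X * R)ᵀ = R * Xᵀ * R := by
        rw [Matrix.transpose_mul, Matrix.transpose_mul, hRsym, Matrix.mul_assoc]
      rw [hYt]
      simp only [Matrix.mul_assoc]
      rw [Matrix.trace_mul_comm]
      simp only [Matrix.mul_assoc]
      rw [hRR, hR2, hS5, Matrix.mul_neg, Matrix.trace_neg]
    have hright : ((X * A₀ᵀ)ᵀ * (X * A₀ᵀ)).trace = (Xᵀ * (X * D)).trace := by
      have hZt : (X * A₀ᵀ)ᵀ = A₀ * Xᵀ := by
        rw [Matrix.transpose_mul, Matrix.transpose_transpose]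
      rw [hZt]
      simp only [Matrix.mul_assoc]
      rw [Matrix.trace_mul_comm]
      simp only [Matrix.mul_assoc]
      rfl
    have hY0 : R * X * R = 0 := by
      apply eq_zero_of_trace_eq_zero
      rw [hleft, hright.symm]
      rw [sq_sum_trace]
      have : (0:ℝ) ≤ ∑ i, ∑ j, ((X * A₀ᵀ) i j)^2 := by positivity
      linarith
    have hXeq : R⁻¹ * (R * X * R) * R⁻¹ = X := by
      rw [Matrix.mul_assoc R X R, Matrix.nonsing_inv_mul_cancel_left _ _ hRdet,
        Matrix.mul_assoc, Matrix.mul_nonsing_inv _ hRdet, Matrix.mul_one]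
    rw [← hXeq, hY0, Matrix.mul_zero, Matrix.zero_mul]
  have hcomm : S * A₀ = A₀ * S := by
    have := sub_eq_zero.mp hX0
    exact this
  -- the complex structure
  have hcomm' : S⁻¹ * A₀ = A₀ * S⁻¹ := by
    have e1 : S⁻¹ * (S * A₀) * S⁻¹ = A₀ * S⁻¹ := by
      rw [Matrix.nonsing_inv_mul_cancel_left _ _ hSdet]
    have e2 : S⁻¹ * (A₀ * S) * S⁻¹ = S⁻¹ * A₀ := by
      rw [← Matrix.mul_assoc, Matrix.mul_assoc (S⁻¹ * A₀) S S⁻¹,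
        Matrix.mul_nonsing_inv _ hSdet, Matrix.mul_one]
    rw [← e1, hcomm, e2]
  refine ⟨A₀ * S⁻¹, S, ?_, ?_, ?_, R, hRsym, hRdet, hR2⟩
  · rw [Matrix.transpose_mul, Matrix.transpose_nonsing_inv, hSsym, hskew,
      Matrix.mul_neg, ← hcomm']
  · have hSS : S⁻¹ * S⁻¹ = D⁻¹ := by rw [← Matrix.mul_inv_rev, hS2]
    calc A₀ * S⁻¹ * (A₀ * S⁻¹) = A₀ * (S⁻¹ * A₀) * S⁻¹ := by
          simp only [Matrix.mul_assoc]
      _ = A₀ * (A₀ * S⁻¹) * S⁻¹ := by rw [hcomm']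
      _ = A₀ * A₀ * (S⁻¹ * S⁻¹) := by simp only [Matrix.mul_assoc]
      _ = -D * D⁻¹ := by rw [hSS, ← neg_neg (A₀ * A₀), ← hD', Matrix.neg_mul]
      _ = -(D * D⁻¹) := by rw [Matrix.neg_mul]
      _ = -1 := by rw [Matrix.mul_nonsing_inv _ hDdet]
  · rw [Matrix.nonsing_inv_mul_cancel_right _ _ hSdet]

lemma claimA (A₀ K S R : Matrix m m ℝ) (hKS : K * S = A₀) (hKs : Kᵀ = -K)
    (hK2 : K * K = -1) (hRsym : Rᵀ = R) (hRdet : IsUnit R.det) (hRS : R * R = S)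
    (B : Matrix m m ℝ) (hBskew : Bᵀ = -B) (hBK : K * B = B * K) (hB0 : B ≠ 0) :
    ∃ t : ℝ, t ≠ 0 ∧ ∃ x : m → ℝ, x ≠ 0 ∧ B *ᵥ x = t • (A₀ *ᵥ x) := by
  set C := K * B with hCdef
  have hKC : K * C = -B := by
    rw [hCdef, ← Matrix.mul_assoc, hK2, Matrix.neg_mul, Matrix.one_mul]
  have hCsym : Cᵀ = C := by
    rw [hCdef, Matrix.transpose_mul, hBskew, hKs, Matrix.neg_mul, Matrix.mul_neg,
      neg_neg, ← hBK]
  have hC0 : C ≠ 0 := by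
    intro h
    apply hB0
    have := hKC
    rw [h, Matrix.mul_zero] at this
    simpa using this.symm
  have hRinvT : R⁻¹ᵀ = R⁻¹ := by rw [Matrix.transpose_nonsing_inv, hRsym]
  set C' := R⁻¹ * C * R⁻¹ with hC'def
  have hCC' : R * C' * R = C := by
    rw [hC'def]
    simp only [Matrix.mul_assoc]
    rw [Matrix.nonsing_inv_mul _ hRdet, Matrix.mul_one,
      Matrix.mul_nonsing_inv_cancel_left _ _ hRdet]
  have hC'sym : C'ᵀ = C' := by
    rw [hC'def, Matrix.transpose_mul, Matrix.transpose_mul, hRinvT, hCsym]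
    simp only [Matrix.mul_assoc]
  have hC'0 : C' ≠ 0 := by
    intro h
    apply hC0
    rw [← hCC', h, Matrix.mul_zero, Matrix.zero_mul]
  have hHerm : C'.IsHermitian := by
    rw [Matrix.IsHermitian, Matrix.conjTranspose_eq_transpose_of_trivial]
    exact hC'sym
  obtain ⟨v, t, ht, hv, hvec⟩ := hHerm.exists_eigenvector_of_ne_zero hC'0
  set x := R⁻¹ *ᵥ v with hxdef
  have hRx : R *ᵥ x = v := by
    rw [hxdef, Matrix.mulVec_mulVec, Matrix.mul_nonsing_inv _ hRdet, Matrix.one_mulVec]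
  have hx0 : x ≠ 0 := by
    intro h
    apply hv
    rw [← hRx, h, Matrix.mulVec_zero]
  have hCx : C *ᵥ x = t • (S *ᵥ x) := by
    have hSx : S *ᵥ x = R *ᵥ v := by
      rw [← hRS, ← Matrix.mulVec_mulVec, hRx]
    rw [← hCC', ← Matrix.mulVec_mulVec, ← Matrix.mulVec_mulVec, hRx, hvec,
      Matrix.mulVec_smul, hSx]
  refine ⟨-t, neg_ne_zero.mpr ht, x, hx0, ?_⟩
  have hBC : B = -(K * C) := by rw [hKC, neg_neg]
  have hBx : B *ᵥ x = -(K *ᵥ (C *ᵥ x)) := by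
    rw [hBC, Matrix.neg_mulVec, ← Matrix.mulVec_mulVec]
  rw [hBx, hCx, Matrix.mulVec_smul, Matrix.mulVec_mulVec, hKS, neg_smul]

section Construction

variable (r : ℕ)

def esum : (Fin r ⊕ Fin r) ≃ Fin (2 * r) :=
  finSumFinEquiv.trans (finCongr (by omega))

noncomputable def reE : Matrix (Fin r ⊕ Fin r) (Fin r ⊕ Fin r) ℝ ≃ₗ[ℝ]
    Matrix (Fin (2 * r)) (Fin (2 * r)) ℝ :=
  Matrix.reindexLinearEquiv ℝ ℝ (esum r) (esum r)

def fromBlocksL : (Matrix (Fin r) (Fin r) ℝ × Matrix (Fin r) (Fin r) ℝ) →ₗ[ℝ]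
    Matrix (Fin r ⊕ Fin r) (Fin r ⊕ Fin r) ℝ where
  toFun p := Matrix.fromBlocks p.1 p.2 p.2 (-p.1)
  map_add' p q := by
    simp only [Prod.fst_add, Prod.snd_add, ← Matrix.fromBlocks_add, neg_add]
  map_smul' c p := by
    simp only [Prod.smul_fst, Prod.smul_snd, RingHom.id_apply, Matrix.fromBlocks_smul,
      smul_neg]

noncomputable def consL : ((skewSub (Fin r)) × (skewSub (Fin r))) →ₗ[ℝ]
    Matrix (Fin (2 * r)) (Fin (2 * r)) ℝ :=
  (reE r).toLinearMap ∘ₗ (fromBlocksL r) ∘ₗ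
    ((skewSub (Fin r)).subtype.prodMap (skewSub (Fin r)).subtype)

noncomputable def consA₀ : Matrix (Fin (2 * r)) (Fin (2 * r)) ℝ :=
  reE r (Matrix.fromBlocks 0 1 (-1) 0)

lemma consL_inj : Function.Injective (consL r) := by
  rintro ⟨⟨K, hK⟩, ⟨Q, hQ⟩⟩ ⟨⟨K', hK'⟩, ⟨Q', hQ'⟩⟩ h
  simp only [consL, LinearMap.comp_apply, LinearMap.prodMap_apply, Submodule.subtype_apply] at h
  have h2 := (reE r).injective h
  simp only [fromBlocksL, LinearMap.coe_mk, AddHom.coe_mk] at h2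
  have hKK : K = K' := by
    have := congrArg Matrix.toBlocks₁₁ h2
    simpa [Matrix.toBlocks_fromBlocks₁₁] using this
  have hQQ : Q = Q' := by
    have := congrArg Matrix.toBlocks₁₂ h2
    simpa [Matrix.toBlocks_fromBlocks₁₂] using this
  simp only [Prod.mk.injEq, Subtype.mk.injEq]
  exact ⟨hKK, hQQ⟩


lemma dot_self_nonneg (m : Type*) [Fintype m] (u : m → ℝ) : 0 ≤ u ⬝ᵥ u :=
  Finset.sum_nonneg fun i _ => mul_self_nonneg _

lemma consA₀_skew : (consA₀ r)ᵀ = -(consA₀ r) := by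
  rw [consA₀, reE, Matrix.reindexLinearEquiv_apply, Matrix.transpose_reindex,
    Matrix.fromBlocks_transpose]
  have hneg : -(Matrix.reindex (esum r) (esum r) (Matrix.fromBlocks 0 1 (-1) 0))
      = Matrix.reindex (esum r) (esum r)
        (-(Matrix.fromBlocks (0:Matrix (Fin r) (Fin r) ℝ) 1 (-1) 0)) := rfl
  rw [hneg]
  congr 1
  rw [Matrix.fromBlocks_neg]
  simp

lemma consL_skew (p : (skewSub (Fin r)) × (skewSub (Fin r))) :
    ((consL r) p)ᵀ = -((consL r) p) := by
  have hK : ((p.1 : Matrix (Fin r) (Fin r) ℝ))ᵀ = -(p.1 : Matrix (Fin r) (Fin r) ℝ) := p.1.2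
  have hQ : ((p.2 : Matrix (Fin r) (Fin r) ℝ))ᵀ = -(p.2 : Matrix (Fin r) (Fin r) ℝ) := p.2.2
  simp only [consL, LinearMap.comp_apply, LinearMap.prodMap_apply, Submodule.subtype_apply,
    fromBlocksL, LinearMap.coe_mk, AddHom.coe_mk, reE, LinearEquiv.coe_coe,
    Matrix.reindexLinearEquiv_apply]
  rw [Matrix.transpose_reindex, Matrix.fromBlocks_transpose, Matrix.transpose_neg, hK, hQ]
  have : -(Matrix.reindex (esum r) (esum r)
        (Matrix.fromBlocks (p.1 : Matrix (Fin r) (Fin r) ℝ) (p.2 : Matrix (Fin r) (Fin r) ℝ)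
          (p.2 : Matrix (Fin r) (Fin r) ℝ) (-(p.1 : Matrix (Fin r) (Fin r) ℝ))))
      = Matrix.reindex (esum r) (esum r)
        (-(Matrix.fromBlocks (p.1 : Matrix (Fin r) (Fin r) ℝ) (p.2 : Matrix (Fin r) (Fin r) ℝ)
          (p.2 : Matrix (Fin r) (Fin r) ℝ) (-(p.1 : Matrix (Fin r) (Fin r) ℝ)))) := rfl
  rw [this]
  congr 1
  rw [Matrix.fromBlocks_neg]

lemma blockF_inj (K Q : Matrix (Fin r) (Fin r) ℝ) (hK : Kᵀ = -K) (hQ : Qᵀ = -Q)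
    (y : (Fin r ⊕ Fin r) → ℝ)
    (h : (Matrix.fromBlocks K (1 + Q) (-1 + Q) (-K)) *ᵥ y = 0) : y = 0 := by
  rw [Matrix.fromBlocks_mulVec] at h
  set u := y ∘ Sum.inl with hu
  set v := y ∘ Sum.inr with hv
  have eq1 : K *ᵥ u + (1 + Q) *ᵥ v = 0 := funext fun i => congrFun h (Sum.inl i)
  have eq2 : (-1 + Q) *ᵥ u + (-K) *ᵥ v = 0 := funext fun i => congrFun h (Sum.inr i)
  rw [Matrix.add_mulVec, Matrix.one_mulVec] at eq1
  rw [Matrix.add_mulVec, Matrix.neg_mulVec, Matrix.one_mulVec, Matrix.neg_mulVec] at eq2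
  have a1 : v ⬝ᵥ (K *ᵥ u) + (v ⬝ᵥ v + v ⬝ᵥ (Q *ᵥ v)) = 0 := by
    have := congrArg (fun w => v ⬝ᵥ w) eq1
    simpa [dotProduct_add] using this
  have a2 : -(u ⬝ᵥ u) + u ⬝ᵥ (Q *ᵥ u) + -(u ⬝ᵥ (K *ᵥ v)) = 0 := by
    have := congrArg (fun w => u ⬝ᵥ w) eq2
    simpa [dotProduct_add, dotProduct_neg] using this
  have b1 := dot_skew Q hQ u
  have b2 := dot_skew Q hQ v
  have b3 := dot_skew_cross K hK u v
  have hsum : u ⬝ᵥ u + v ⬝ᵥ v = 0 := by linarith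
  have hu0 : u = 0 := by
    rw [← dotProduct_self_eq_zero (v := u)]
    have := dot_self_nonneg (Fin r) u
    have := dot_self_nonneg (Fin r) v
    linarith
  have hv0 : v = 0 := by
    rw [← dotProduct_self_eq_zero (v := v)]
    have := dot_self_nonneg (Fin r) u
    have := dot_self_nonneg (Fin r) v
    linarith
  funext i
  cases i with
  | inl i => exact congrFun hu0 i
  | inr i => exact congrFun hv0 i

lemma cons_add (p : (skewSub (Fin r)) × (skewSub (Fin r))) :
    consA₀ r + consL r p = reE r (Matrix.fromBlocks (p.1 : Matrix (Fin r) (Fin r) ℝ)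
      (1 + (p.2 : Matrix (Fin r) (Fin r) ℝ)) (-1 + (p.2 : Matrix (Fin r) (Fin r) ℝ))
      (-(p.1 : Matrix (Fin r) (Fin r) ℝ))) := by
  simp only [consL, LinearMap.comp_apply, LinearMap.prodMap_apply, Submodule.subtype_apply,
    fromBlocksL, LinearMap.coe_mk, AddHom.coe_mk, reE, LinearEquiv.coe_coe, consA₀]
  rw [← map_add]
  congr 1
  rw [Matrix.fromBlocks_add]
  simp

lemma cons_rank_inj (p : (skewSub (Fin r)) × (skewSub (Fin r))) :
    Function.Injective ((consA₀ r + consL r p).mulVec) := by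
  have key : ∀ x, (consA₀ r + consL r p) *ᵥ x = 0 → x = 0 := by
    intro x hx
    rw [cons_add] at hx
    set F := Matrix.fromBlocks (p.1 : Matrix (Fin r) (Fin r) ℝ)
        (1 + (p.2 : Matrix (Fin r) (Fin r) ℝ)) (-1 + (p.2 : Matrix (Fin r) (Fin r) ℝ))
        (-(p.1 : Matrix (Fin r) (Fin r) ℝ)) with hF
    have hre : (reE r F) *ᵥ x = (F *ᵥ (x ∘ (esum r))) ∘ (esum r).symm := by
      rw [reE, Matrix.reindexLinearEquiv_apply, Matrix.reindex_apply,
        Matrix.submatrix_mulVec_equiv]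
      simp
    rw [hre] at hx
    have hFy : F *ᵥ (x ∘ (esum r)) = 0 := by
      funext j
      have := congrFun hx ((esum r) j)
      simpa using this
    have hy := blockF_inj r (p.1 : Matrix (Fin r) (Fin r) ℝ) (p.2 : Matrix (Fin r) (Fin r) ℝ)
      p.1.2 p.2.2 _ hFy
    funext i
    have := congrFun hy ((esum r).symm i)
    simpa using this
  intro a b hab
  have h0 : (consA₀ r + consL r p) *ᵥ (a - b) = 0 := by
    rw [Matrix.mulVec_sub, hab, sub_self]
  exact sub_eq_zero.mp (key _ h0)

end Construction


lemma existence (r : ℕ) (hr : 1 ≤ r) :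
    ∃ S : AffineSubspace ℝ (Matrix (Fin (2 * r)) (Fin (2 * r)) ℝ),
      (S : Set (Matrix (Fin (2 * r)) (Fin (2 * r)) ℝ)).Nonempty ∧
      (∀ A ∈ S, Aᵀ = -A) ∧ (∀ A ∈ S, A.rank = 2 * r) ∧
      Module.finrank ℝ S.direction = r * (r - 1) := by
  refine ⟨AffineSubspace.mk' (consA₀ r) (LinearMap.range (consL r)), ?_, ?_, ?_, ?_⟩
  · exact ⟨consA₀ r, AffineSubspace.self_mem_mk' _ _⟩
  · intro A hA
    rw [AffineSubspace.mem_mk'] at hA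
    obtain ⟨p, hp⟩ := hA
    have hAe : A = consA₀ r + consL r p := by
      rw [hp, vsub_eq_sub]; abel
    rw [hAe, Matrix.transpose_add, consA₀_skew, consL_skew, neg_add]
  · intro A hA
    rw [AffineSubspace.mem_mk'] at hA
    obtain ⟨p, hp⟩ := hA
    have hAe : A = consA₀ r + consL r p := by
      rw [hp, vsub_eq_sub]; abel
    rw [hAe]
    exact rank_eq_of_injective (cons_rank_inj r p)
  · rw [AffineSubspace.direction_mk']
    rw [LinearMap.finrank_range_of_inj (consL_inj r)]
    rw [Module.finrank_prod]
    have h2 := finrank_skewSub r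
    omega

lemma upper (r : ℕ) (hr : 1 ≤ r)
    (S : AffineSubspace ℝ (Matrix (Fin (2 * r)) (Fin (2 * r)) ℝ))
    (hne : (S : Set (Matrix (Fin (2 * r)) (Fin (2 * r)) ℝ)).Nonempty)
    (hskew : ∀ A ∈ S, Aᵀ = -A) (hrank : ∀ A ∈ S, A.rank = 2 * r) :
    Module.finrank ℝ S.direction ≤ r * (r - 1) := by
  obtain ⟨A₀, hA₀⟩ := hne
  have hA₀skew := hskew A₀ hA₀
  have hA₀inj : Function.Injective A₀.mulVec := injective_of_rank_eq (hrank A₀ hA₀)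
  have hA₀det : IsUnit A₀.det :=
    (Matrix.isUnit_iff_isUnit_det _).mp (Matrix.mulVec_injective_iff_isUnit.mp hA₀inj)
  obtain ⟨K, S₁, hKs, hK2, hKS, Rm, hRsym, hRdet, hRS⟩ := exists_K A₀ hA₀skew hA₀det
  have hmem : ∀ B ∈ S.direction, B + A₀ ∈ S := by
    intro B hB
    have := AffineSubspace.vadd_mem_of_mem_direction hB hA₀
    rwa [vadd_eq_add] at this
  have hVskew : ∀ B ∈ S.direction, Bᵀ = -B := by
    intro B hB
    have h1 := hskew _ (hmem B hB)
    rw [Matrix.transpose_add, hA₀skew] at h1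
    calc Bᵀ = (Bᵀ + -A₀) + A₀ := by abel
      _ = -(B + A₀) + A₀ := by rw [h1]
      _ = -B := by abel
  have keyzero : ∀ B ∈ S.direction, ∀ t : ℝ, t ≠ 0 → ∀ x,
      B *ᵥ x = t • (A₀ *ᵥ x) → x = 0 := by
    intro B hB t ht x hx
    have hB' : (-(t⁻¹)) • B ∈ S.direction := Submodule.smul_mem _ _ hB
    have hinj := injective_of_rank_eq (hrank _ (hmem _ hB'))
    have h0 : ((-(t⁻¹)) • B + A₀) *ᵥ x = 0 := by
      rw [Matrix.add_mulVec, Matrix.smul_mulVec, hx, smul_smul]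
      rw [show -t⁻¹ * t = -1 by field_simp]
      simp
    apply hinj
    rw [h0, Matrix.mulVec_zero]
  have hcommzero : ∀ B ∈ S.direction, K * B = B * K → B = 0 := by
    intro B hB hcomm
    by_contra hB0
    obtain ⟨t, ht, x, hx, hBx⟩ := claimA A₀ K S₁ Rm hKS hKs hK2 hRsym hRdet hRS B
      (hVskew B hB) hcomm hB0
    exact hx (keyzero B hB t ht x hBx)
  have hle := finrank_le_antiSub K hKs hK2 S.direction hVskew hcommzero
  have hfr := finrank_antiSub K hKs hK2
  have hcard : ((Fintype.card (Fin (2 * r)) : ℕ) : ℝ) = 2 * (r : ℝ) := by simp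
  rw [hcard] at hfr
  have hcast : (Module.finrank ℝ (antiSub K) : ℝ) = ((r * (r - 1) : ℕ) : ℝ) := by
    rw [hfr, Nat.cast_mul, Nat.cast_sub hr, Nat.cast_one]
    ring
  have heq : Module.finrank ℝ (antiSub K) = r * (r - 1) := Nat.cast_injective hcast
  rw [← heq]
  exact hle

end Stmt1Aux

open Stmt1Aux in
/-- For `r ≥ 1` and `n = 2r`, the maximal dimension of a nonempty affine
subspace of the antisymmetric `2r × 2r` real matrices all of whose elements have rank `2r`
equals `r * (r - 1)`. -/
theorem stmt_1 (r : ℕ) (hr : 1 ≤ r) :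
    (∃ S : AffineSubspace ℝ (Matrix (Fin (2 * r)) (Fin (2 * r)) ℝ),
      (S : Set (Matrix (Fin (2 * r)) (Fin (2 * r)) ℝ)).Nonempty ∧
      (∀ A ∈ S, Aᵀ = -A) ∧ (∀ A ∈ S, A.rank = 2 * r) ∧
      Module.finrank ℝ S.direction = r * (r - 1)) ∧
    (∀ S : AffineSubspace ℝ (Matrix (Fin (2 * r)) (Fin (2 * r)) ℝ),
      (S : Set (Matrix (Fin (2 * r)) (Fin (2 * r)) ℝ)).Nonempty →
      (∀ A ∈ S, Aᵀ = -A) → (∀ A ∈ S, A.rank = 2 * r) →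
      Module.finrank ℝ S.direction ≤ r * (r - 1)) := by
  exact ⟨existence r hr, fun S hne hskew hrank => upper r hr S hne hskew hrank⟩
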